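/- Let A ∈ ℝ^{k×n} be a binary (n,k,δ,γ) regular assignment matrix (each column of A has exactly δ ones and each row exactly γ ones). Let B be the random-diagonal encoding matrix built from A with parameter ε ∈ [0,1). Let 𝓕 ⊆ {1,…,n} with |𝓕| = n−s be a non-straggler set such that B_𝓕^T B_𝓕 is almost surely invertible. Let X be a random variable uniform on S and c := E[X²]·E[1/X²]. Let Δ_𝓕 := A_𝓕^T A_𝓕, let Δ_𝓕^{diag} be the diagonal matrix with the same diagonal entries as Δ_𝓕, and set K := Δ_𝓕 + c(m−1)Δ_𝓕^{diag}, assumed invertible. Then the expected approximation error satisfies E[Err_𝓕(B)] ≤ mk − m·1_k^T A_𝓕 K^{−1} A_𝓕^T 1_k. -/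

import Mathlib

open MeasureTheory Matrix

noncomputable section

/-- The set `S = [1-ε, 1+ε] ∪ [-1-ε, -1+ε]`. -/
def Sset (ε : ℝ) : Set ℝ := Set.Icc (1 - ε) (1 + ε) ∪ Set.Icc (-1 - ε) (-1 + ε)

/-- The uniform probability distribution on `Sset ε`; for `ε = 0` this is the uniform
distribution on `{-1, 1}`. -/
noncomputable def uniformS (ε : ℝ) : Measure ℝ :=
  if ε = 0 then (2 : ENNReal)⁻¹ • (Measure.dirac (1 : ℝ) + Measure.dirac (-1 : ℝ))
  else (volume (Sset ε))⁻¹ • volume.restrict (Sset ε)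

/-- Joint law of the diagonal entries of the i.i.d. random diagonal matrices
`D_1, …, D_m` (the entry of `D_i` at position `j` is `d (i, j)`). -/
noncomputable def μD (m : ℕ) (ν : Type*) [Fintype ν] (ε : ℝ) :
    Measure ((Fin m × ν) → ℝ) :=
  Measure.pi fun _ => uniformS ε

/-- Random-diagonal encoding matrix: the vertical stack of `A * D_1, …, A * D_m`,
with rows indexed by `Fin m × κ` (block `i`, row `r`). -/
def encB {m : ℕ} {κ ν : Type*} (A : Matrix κ ν ℝ) (d : (Fin m × ν) → ℝ) :
    Matrix (Fin m × κ) ν ℝ :=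
  Matrix.of fun p j => A p.2 j * d (p.1, j)

/-- The target matrix `F = [f_1 | … | f_m]`, where `f_i` is `1` on the `i`-th block. -/
def Fmat (m : ℕ) (κ : Type*) : Matrix (Fin m × κ) (Fin m) ℝ :=
  Matrix.of fun p i => if p.1 = i then 1 else 0

/-- Column submatrix corresponding to the non-straggler set `𝓕`. -/
def subCols {α ν : Type*} (M : Matrix α ν ℝ) (𝓕 : Finset ν) : Matrix α ↥𝓕 ℝ :=
  M.submatrix id (fun j => (j : ν))

/-- Squared Frobenius norm. -/
def frobSq {α β : Type*} [Fintype α] [Fintype β] (M : Matrix α β ℝ) : ℝ :=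
  ∑ i, ∑ j, (M i j) ^ 2

/-- The approximation error `Err_𝓕(B) = inf_R ‖B_𝓕 R − F‖_F²`. -/
noncomputable def err {m : ℕ} {κ ν : Type*} [Fintype κ] [Fintype ν]
    (B : Matrix (Fin m × κ) ν ℝ) (𝓕 : Finset ν) : ℝ :=
  ⨅ R : Matrix ↥𝓕 (Fin m) ℝ, frobSq (subCols B 𝓕 * R - Fmat m κ)

namespace StmtAux


lemma measSset (ε : ℝ) : MeasurableSet (Sset ε) := measurableSet_Icc.union measurableSet_Icc

lemma volS_ne_top (ε : ℝ) : volume (Sset ε) ≠ ⊤ := by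
  refine ne_of_lt (lt_of_le_of_lt (measure_union_le _ _) ?_)
  rw [Real.volume_Icc, Real.volume_Icc]
  exact ENNReal.add_lt_top.mpr ⟨ENNReal.ofReal_lt_top, ENNReal.ofReal_lt_top⟩

lemma volS_ne_zero {ε : ℝ} (hε : 0 < ε) : volume (Sset ε) ≠ 0 := by
  intro h0
  have h : volume (Set.Icc (1-ε) (1+ε)) ≤ volume (Sset ε) :=
    measure_mono Set.subset_union_left
  rw [h0, Real.volume_Icc, nonpos_iff_eq_zero, ENNReal.ofReal_eq_zero] at h
  linarith

lemma isProb {ε : ℝ} (hε0 : 0 ≤ ε) : IsProbabilityMeasure (uniformS ε) := by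
  constructor
  rcases eq_or_lt_of_le hε0 with h | h
  · simp only [uniformS, ← h, if_pos rfl]
    simp [Measure.smul_apply]
    rw [ENNReal.inv_two_add_inv_two]
  · simp only [uniformS, if_neg (ne_of_gt h)]
    simp [Measure.smul_apply, Measure.restrict_apply MeasurableSet.univ]
    rw [ENNReal.inv_mul_cancel (volS_ne_zero h) (volS_ne_top ε)]

lemma ae_mem_Sset {ε : ℝ} (hε0 : 0 ≤ ε) : ∀ᵐ x ∂uniformS ε, x ∈ Sset ε := by
  rcases eq_or_lt_of_le hε0 with h | h
  · subst h
    rw [ae_iff]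
    have hset : {a : ℝ | ¬ a ∈ Sset 0} = (Sset 0)ᶜ := rfl
    have h1 : (1:ℝ) ∈ Sset 0 := by simp [Sset]
    have h2 : (-1:ℝ) ∈ Sset 0 := by simp [Sset]
    simp only [uniformS, if_pos rfl, if_true, hset, Measure.smul_apply, Measure.add_apply]
    rw [Measure.dirac_apply' _ (measSset 0).compl, Measure.dirac_apply' _ (measSset 0).compl]
    simp [h1, h2]
  · simp only [uniformS, if_neg (ne_of_gt h)]
    exact Measure.ae_smul_measure (ae_restrict_mem (measSset ε)) _

lemma ne_zero_of_mem {ε : ℝ} (hε1 : ε < 1) {x : ℝ} (hx : x ∈ Sset ε) : x ≠ 0 := by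
  rcases hx with ⟨h1, h2⟩ | ⟨h1, h2⟩ <;> intro h <;> rw [h] at h1 h2 <;> linarith

lemma abs_mem {ε : ℝ} (hε1 : ε < 1) {x : ℝ} (hx : x ∈ Sset ε) :
    1 - ε ≤ |x| ∧ |x| ≤ 1 + ε := by
  rcases hx with ⟨h1, h2⟩ | ⟨h1, h2⟩ <;> rcases abs_cases x with ⟨he, _⟩ | ⟨he, _⟩ <;>
    rw [he] <;> constructor <;> linarith


lemma neg_preimage_Sset (ε : ℝ) : Neg.neg ⁻¹' (Sset ε) = Sset ε := by
  ext x
  simp only [Sset, Set.mem_preimage, Set.mem_union, Set.mem_Icc]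
  constructor <;> rintro (⟨h1, h2⟩ | ⟨h1, h2⟩)
  · right; constructor <;> linarith
  · left; constructor <;> linarith
  · right; constructor <;> linarith
  · left; constructor <;> linarith

lemma map_neg_uniformS {ε : ℝ} (hε0 : 0 ≤ ε) :
    (uniformS ε).map Neg.neg = uniformS ε := by
  rcases eq_or_lt_of_le hε0 with h | h
  · subst h
    simp only [uniformS, if_pos rfl, if_true]
    rw [Measure.map_smul, Measure.map_add _ _ measurable_neg,
      Measure.map_dirac' measurable_neg, Measure.map_dirac' measurable_neg]
    norm_num [add_comm]
  · simp only [uniformS, if_neg h.ne']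
    rw [Measure.map_smul]
    congr 1
    conv_lhs => rw [← neg_preimage_Sset ε]
    rw [← Measure.restrict_map measurable_neg (measSset ε),
      (Measure.measurePreserving_neg (volume : Measure ℝ)).map_eq]

lemma integral_odd {ε : ℝ} (hε0 : 0 ≤ ε) {f : ℝ → ℝ} (hf : Measurable f)
    (hodd : ∀ x, f (-x) = - f x) : ∫ x, f x ∂uniformS ε = 0 := by
  have h1 : ∫ x, f x ∂uniformS ε = ∫ x, f (-x) ∂uniformS ε := by
    conv_lhs => rw [← map_neg_uniformS hε0]
    rw [integral_map measurable_neg.aemeasurable hf.aestronglyMeasurable]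
  simp_rw [hodd, integral_neg] at h1
  linarith

lemma integrable_uniformS {ε : ℝ} (hε0 : 0 ≤ ε) {f : ℝ → ℝ} (hf : Measurable f) {C : ℝ}
    (hC : ∀ x ∈ Sset ε, ‖f x‖ ≤ C) : Integrable f (uniformS ε) := by
  haveI := isProb hε0
  apply Integrable.mono' (integrable_const C) hf.aestronglyMeasurable
  filter_upwards [ae_mem_Sset hε0] with x hx using hC x hx

section epsvars
variable {ε : ℝ} (hε0 : 0 ≤ ε) (hε1 : ε < 1)
include hε0 hε1

lemma integrable_id' : Integrable (fun x : ℝ => x) (uniformS ε) := by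
  refine integrable_uniformS hε0 measurable_id (C := 1 + ε) fun x hx => ?_
  simpa using (abs_mem hε1 hx).2

lemma integrable_inv' : Integrable (fun x : ℝ => x⁻¹) (uniformS ε) := by
  refine integrable_uniformS hε0 measurable_inv (C := (1 - ε)⁻¹) fun x hx => ?_
  rw [Real.norm_eq_abs, abs_inv]
  exact inv_anti₀ (by linarith) (abs_mem hε1 hx).1

lemma integrable_sq' : Integrable (fun x : ℝ => x ^ 2) (uniformS ε) := by
  refine integrable_uniformS hε0 (by fun_prop) (C := (1 + ε) ^ 2) fun x hx => ?_
  rw [Real.norm_eq_abs, abs_pow, sq_abs, ← sq_abs]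
  exact pow_le_pow_left₀ (abs_nonneg x) (abs_mem hε1 hx).2 2
lemma integrable_invsq' : Integrable (fun x : ℝ => (x ^ 2)⁻¹) (uniformS ε) := by
  refine integrable_uniformS hε0 (by fun_prop) (C := ((1 - ε) ^ 2)⁻¹) fun x hx => ?_
  rw [Real.norm_eq_abs, abs_inv, abs_pow, sq_abs, ← sq_abs]
  exact inv_anti₀ (pow_pos (by linarith) 2) (pow_le_pow_left₀ (by linarith) (abs_mem hε1 hx).1 2)

lemma integral_id : ∫ x, x ∂uniformS ε = 0 :=
  integral_odd hε0 measurable_id (fun x => rfl)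

lemma integral_inv : ∫ x, x⁻¹ ∂uniformS ε = 0 :=
  integral_odd hε0 measurable_inv (fun x => by rw [inv_neg])

end epsvars


lemma integral_pi_prod {ι : Type*} [Fintype ι] (μ : Measure ℝ) [IsProbabilityMeasure μ]
    (g : ι → ℝ → ℝ) :
    ∫ d : ι → ℝ, ∏ p, g p (d p) ∂(Measure.pi fun _ => μ) = ∏ p, ∫ x, g p x ∂μ := by
  letI : MeasureSpace ℝ := ⟨μ⟩
  haveI : SigmaFinite (volume : Measure ℝ) := by
    haveI : IsProbabilityMeasure (volume : Measure ℝ) := ‹IsProbabilityMeasure μ›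
    infer_instance
  exact MeasureTheory.integral_fintype_prod_eq_prod (fun p => g p) (μ := fun _ => μ)

lemma integrable_pi_prod {ι : Type*} [Fintype ι] (μ : Measure ℝ) [IsProbabilityMeasure μ]
    (g : ι → ℝ → ℝ) (hg : ∀ p, Integrable (g p) μ) :
    Integrable (fun d : ι → ℝ => ∏ p, g p (d p)) (Measure.pi fun _ => μ) := by
  letI : MeasureSpace ℝ := ⟨μ⟩
  haveI : SigmaFinite (volume : Measure ℝ) := by
    haveI : IsProbabilityMeasure (volume : Measure ℝ) := ‹IsProbabilityMeasure μ›
    infer_instance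
  exact MeasureTheory.Integrable.fintype_prod hg

lemma prod_eq_of_support {ι : Type*} [Fintype ι] (f : ι → ℝ) (s : Finset ι)
    (h : ∀ x ∉ s, f x = 1) : ∏ p, f p = ∏ p ∈ s, f p :=
  (Finset.prod_subset (Finset.subset_univ s) (fun x _ hx => h x hx)).symm

section patterns
variable {ι : Type*} [Fintype ι] [DecidableEq ι] (μ : Measure ℝ) [IsProbabilityMeasure μ]

lemma pattern_same (q₁ q₂ : ι) (h12 : q₁ ≠ q₂)
    (Isq : Integrable (fun x : ℝ => x ^ 2) μ)
    (Iisq : Integrable (fun x : ℝ => (x ^ 2)⁻¹) μ) :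
    Integrable (fun d : ι → ℝ => (d q₁ * (d q₂)⁻¹) * (d q₁ * (d q₂)⁻¹))
        (Measure.pi fun _ => μ) ∧
    ∫ d : ι → ℝ, (d q₁ * (d q₂)⁻¹) * (d q₁ * (d q₂)⁻¹) ∂(Measure.pi fun _ => μ)
      = (∫ x, x ^ 2 ∂μ) * ∫ x, (x ^ 2)⁻¹ ∂μ := by
  set g : ι → ℝ → ℝ := fun p t => if p = q₁ then t ^ 2 else if p = q₂ then (t ^ 2)⁻¹ else 1
    with hgdef
  have hg : ∀ p, Integrable (g p) μ := by
    intro p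
    rw [hgdef]
    dsimp only
    split_ifs
    · exact Isq
    · exact Iisq
    · exact integrable_const 1
  have hprod : ∀ h : ι → ℝ, ∏ p, g p (h p) = g q₁ (h q₁) * g q₂ (h q₂) := by
    intro h
    rw [prod_eq_of_support _ {q₁, q₂} (by
      intro p hp
      simp only [Finset.mem_insert, Finset.mem_singleton, not_or] at hp
      simp [hgdef, hp.1, hp.2])]
    rw [Finset.prod_insert (by simp [h12]), Finset.prod_singleton]
  have hfun : ∀ d : ι → ℝ, (d q₁ * (d q₂)⁻¹) * (d q₁ * (d q₂)⁻¹) = ∏ p, g p (d p) := by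
    intro d
    rw [hprod]
    simp only [hgdef, if_pos rfl, if_neg h12.symm, if_true, eq_self_iff_true]
    ring
  constructor
  · exact (integrable_pi_prod μ g hg).congr
      (Filter.Eventually.of_forall fun d => (hfun d).symm)
  · simp only [hfun]
    rw [integral_pi_prod μ g, prod_eq_of_support _ {q₁, q₂} (by
      intro p hp
      simp only [Finset.mem_insert, Finset.mem_singleton, not_or] at hp
      simp [hgdef, hp.1, hp.2]),
      Finset.prod_insert (by simp [h12]), Finset.prod_singleton]
    simp [hgdef, if_pos rfl, if_neg h12.symm]

lemma pattern_diff (q₁ q₂ q₃ q₄ : ι)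
    (h12 : q₁ ≠ q₂) (h13 : q₁ ≠ q₃) (h14 : q₁ ≠ q₄)
    (h23 : q₂ ≠ q₃) (h24 : q₂ ≠ q₄) (h34 : q₃ ≠ q₄)
    (hid : ∫ x, x ∂μ = 0)
    (Iid : Integrable (fun x : ℝ => x) μ)
    (Iinv : Integrable (fun x : ℝ => x⁻¹) μ) :
    Integrable (fun d : ι → ℝ => (d q₁ * (d q₃)⁻¹) * (d q₂ * (d q₄)⁻¹))
        (Measure.pi fun _ => μ) ∧
    ∫ d : ι → ℝ, (d q₁ * (d q₃)⁻¹) * (d q₂ * (d q₄)⁻¹) ∂(Measure.pi fun _ => μ) = 0 := by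
  set g : ι → ℝ → ℝ := fun p t =>
    if p = q₁ then t else if p = q₂ then t else if p = q₃ then t⁻¹ else if p = q₄ then t⁻¹ else 1
    with hgdef
  have hg : ∀ p, Integrable (g p) μ := by
    intro p
    rw [hgdef]
    dsimp only
    split_ifs
    · exact Iid
    · exact Iid
    · exact Iinv
    · exact Iinv
    · exact integrable_const 1
  have hout : ∀ p, p ∉ ({q₁, q₂, q₃, q₄} : Finset ι) → ∀ t : ℝ, g p t = 1 := by
    intro p hp t
    simp only [Finset.mem_insert, Finset.mem_singleton, not_or] at hp
    simp [hgdef, hp.1, hp.2.1, hp.2.2.1, hp.2.2.2]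
  have hprod : ∀ h : ι → ℝ,
      ∏ p, g p (h p) = g q₁ (h q₁) * (g q₂ (h q₂) * (g q₃ (h q₃) * g q₄ (h q₄))) := by
    intro h
    rw [prod_eq_of_support _ {q₁, q₂, q₃, q₄} (fun p hp => hout p hp (h p))]
    rw [Finset.prod_insert (by simp [h12, h13, h14]),
      Finset.prod_insert (by simp [h23, h24]),
      Finset.prod_insert (by simp [h34]), Finset.prod_singleton]
  have hfun : ∀ d : ι → ℝ, (d q₁ * (d q₃)⁻¹) * (d q₂ * (d q₄)⁻¹) = ∏ p, g p (d p) := by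
    intro d
    rw [hprod]
    simp only [hgdef, if_pos rfl, if_neg h12.symm, if_neg h13.symm, if_neg h14.symm,
      if_neg h23.symm, if_neg h24.symm, if_neg h34.symm, if_neg h12, if_neg h13, if_neg h23,
      if_true, eq_self_iff_true]
    ring
  constructor
  · exact (integrable_pi_prod μ g hg).congr
      (Filter.Eventually.of_forall fun d => (hfun d).symm)
  · simp only [hfun]
    rw [integral_pi_prod μ g]
    apply Finset.prod_eq_zero (Finset.mem_univ q₁)
    simp only [hgdef, if_pos rfl]
    exact hid


end patterns
end StmtAux

open StmtAux

/-- Lemma 1: expected-error upper bound for the random-diagonal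
construction with a binary `(n,k,δ,γ)` regular assignment matrix. -/
theorem stmt0 (n k m s δ γ : ℕ) (hm : 0 < m) (hs : s ≤ n)
    (ε : ℝ) (hε0 : 0 ≤ ε) (hε1 : ε < 1)
    (A : Matrix (Fin k) (Fin n) ℝ)
    (hbin : ∀ i j, A i j = 0 ∨ A i j = 1)
    (hcol : ∀ j, ∑ i, A i j = (δ : ℝ))
    (hrow : ∀ i, ∑ j, A i j = (γ : ℝ))
    (𝓕 : Finset (Fin n)) (hcard : 𝓕.card = n - s)
    (hinv : ∀ᵐ d ∂(μD m (Fin n) ε),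
      IsUnit ((subCols (encB A d) 𝓕)ᵀ * subCols (encB A d) 𝓕).det)
    (c : ℝ) (hc : c = (∫ x, x ^ 2 ∂uniformS ε) * ∫ x, (x ^ 2)⁻¹ ∂uniformS ε)
    (Δ : Matrix ↥𝓕 ↥𝓕 ℝ) (hΔ : Δ = (subCols A 𝓕)ᵀ * subCols A 𝓕)
    (K : Matrix ↥𝓕 ↥𝓕 ℝ)
    (hK : K = Δ + (c * ((m : ℝ) - 1)) • Matrix.diagonal (fun u => Δ u u))
    (hKinv : IsUnit K.det) :
    ∫ d, err (encB A d) 𝓕 ∂(μD m (Fin n) ε) ≤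
      (m : ℝ) * k -
        (m : ℝ) *
          ((fun _ => (1 : ℝ)) ⬝ᵥ ((subCols A 𝓕 * K⁻¹ * (subCols A 𝓕)ᵀ) *ᵥ fun _ => 1)) := by
  classical
  haveI hP : IsProbabilityMeasure (uniformS ε) := isProb hε0
  have hμDpi : μD m (Fin n) ε = Measure.pi fun _ : Fin m × Fin n => uniformS ε := rfl
  haveI hPpi : IsProbabilityMeasure (μD m (Fin n) ε) := by
    rw [hμDpi]; infer_instance
  set A' : Matrix (Fin k) ↥𝓕 ℝ := subCols A 𝓕 with hA'
  set v : ↥𝓕 → ℝ := A'ᵀ *ᵥ (fun _ => 1) with hv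
  set w : ↥𝓕 → ℝ := K⁻¹ *ᵥ v with hw
  set c2 : ℝ := ∫ x, x ^ 2 ∂uniformS ε with hc2
  set c3 : ℝ := ∫ x, (x ^ 2)⁻¹ ∂uniformS ε with hc3
  set bb : Fin k → ↥𝓕 → ℝ := fun r u => A r ↑u * w u with hbb
  set ent : Fin m → Fin k → Fin m → ((Fin m × Fin n) → ℝ) → ℝ :=
    fun l r i d => (∑ u : ↥𝓕, bb r u * (if l = i then 1 else d (l, ↑u) * (d (i, ↑u))⁻¹))
      - (if l = i then 1 else 0) with hent
  set G' : ((Fin m × Fin n) → ℝ) → ℝ :=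
    fun d => ∑ p : Fin m × Fin k, ∑ i : Fin m, (ent p.1 p.2 i d) ^ 2 with hG'
  set X : Fin k → ℝ := fun r => ((∑ u : ↥𝓕, bb r u) - 1) ^ 2 with hX
  set Y : Fin k → ℝ := fun r => (c2 * c3) * ∑ u : ↥𝓕, (bb r u) ^ 2 with hY
  -- nonnegativity of frobSq
  have hfrob_nonneg : ∀ {α β : Type} [Fintype α] [Fintype β] (M : Matrix α β ℝ), 0 ≤ frobSq M := by
    intro α β _ _ M
    exact Finset.sum_nonneg fun i _ => Finset.sum_nonneg fun j _ => sq_nonneg _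
  have herr_nonneg : ∀ d : (Fin m × Fin n) → ℝ, 0 ≤ err (encB A d) 𝓕 := by
    intro d
    exact le_ciInf fun R => hfrob_nonneg _
  -- the competitor matrix
  set Rmat : ((Fin m × Fin n) → ℝ) → Matrix ↥𝓕 (Fin m) ℝ :=
    fun d => Matrix.of fun u i => w u * (d (i, ↑u))⁻¹ with hRmat
  have herr_le : ∀ d : (Fin m × Fin n) → ℝ, err (encB A d) 𝓕 ≤
      frobSq (subCols (encB A d) 𝓕 * Rmat d - Fmat m (Fin k)) := by
    intro d
    refine ciInf_le ⟨0, ?_⟩ (Rmat d)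
    rintro y ⟨R, rfl⟩
    exact hfrob_nonneg _
  -- a.e. membership
  have haeS : ∀ᵐ d ∂(μD m (Fin n) ε), ∀ p, d p ∈ Sset ε := by
    rw [ae_all_iff]
    intro p
    rw [ae_iff]
    have h0 : uniformS ε ({x : ℝ | x ∈ Sset ε}ᶜ) = 0 := by
      have := ae_mem_Sset (ε := ε) hε0
      rw [ae_iff] at this
      exact this
    rw [hμDpi]
    exact Measure.pi_eval_preimage_null (α := fun _ : Fin m × Fin n => ℝ)
      (fun _ : Fin m × Fin n => uniformS ε) (i := p) h0
  -- pointwise identification of the error with G'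
  have hGeq : ∀ d : (Fin m × Fin n) → ℝ, (∀ p, d p ≠ 0) →
      frobSq (subCols (encB A d) 𝓕 * Rmat d - Fmat m (Fin k)) = G' d := by
    intro d hd
    rw [hG']
    simp only [frobSq]
    refine Finset.sum_congr rfl fun p _ => Finset.sum_congr rfl fun i _ => ?_
    congr 1
    rw [hent]
    simp only [Matrix.sub_apply, Matrix.mul_apply, subCols, Matrix.submatrix_apply, id_eq,
      encB, Fmat, Matrix.of_apply, Rmat]
    congr 1
    refine Finset.sum_congr rfl fun u _ => ?_
    by_cases hli : p.1 = i
    · rw [if_pos hli, hbb, ← hli]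
      field_simp [hd (p.1, ↑u)]
    · rw [if_neg hli, hbb]
      ring
  have herrG' : ∀ᵐ d ∂(μD m (Fin n) ε), err (encB A d) 𝓕 ≤ G' d := by
    filter_upwards [haeS] with d hd
    rw [← hGeq d (fun p => ne_zero_of_mem hε1 (hd p))]
    exact herr_le d
  -- per-entry integrals
  have hent_key : ∀ (l : Fin m) (r : Fin k) (i : Fin m),
      Integrable (fun d => (ent l r i d) ^ 2) (μD m (Fin n) ε) ∧
      ∫ d, (ent l r i d) ^ 2 ∂(μD m (Fin n) ε) = if l = i then X r else Y r := by
    intro l r i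
    by_cases hli : l = i
    · have hconst : (fun d : (Fin m × Fin n) → ℝ => (ent l r i d) ^ 2) = fun _ => X r := by
        funext d
        simp only [hent, hX, if_pos hli, mul_one]
      rw [hconst, if_pos hli]
      refine ⟨integrable_const _, ?_⟩
      simp [measure_univ]
    · have key : ∀ u u' : ↥𝓕,
          Integrable (fun d : (Fin m × Fin n) → ℝ =>
            (bb r u * (d (l, ↑u) * (d (i, ↑u))⁻¹)) * (bb r u' * (d (l, ↑u') * (d (i, ↑u'))⁻¹)))
            (μD m (Fin n) ε) ∧
          ∫ d, (bb r u * (d (l, ↑u) * (d (i, ↑u))⁻¹)) * (bb r u' * (d (l, ↑u') * (d (i, ↑u'))⁻¹))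
              ∂(μD m (Fin n) ε)
            = if u = u' then (bb r u * bb r u') * (c2 * c3) else 0 := by
        intro u u'
        by_cases huu : u = u'
        · subst huu
          have hne : (l, (↑u : Fin n)) ≠ (i, ↑u) := by simp [hli]
          have hps := pattern_same (uniformS ε) (l, (↑u : Fin n)) (i, ↑u) hne
            (integrable_sq' hε0 hε1) (integrable_invsq' hε0 hε1)
          have hre : (fun d : (Fin m × Fin n) → ℝ =>
              (bb r u * (d (l, ↑u) * (d (i, ↑u))⁻¹)) * (bb r u * (d (l, ↑u) * (d (i, ↑u))⁻¹)))
              = fun d => (bb r u * bb r u) *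
                ((d (l, ↑u) * (d (i, ↑u))⁻¹) * (d (l, ↑u) * (d (i, ↑u))⁻¹)) := by
            funext d; ring
          constructor
          · rw [hμDpi, hre]; exact hps.1.const_mul _
          · rw [hμDpi, hre, integral_const_mul, hps.2, if_pos rfl, ← hc2, ← hc3]
        · have hcoe : (↑u : Fin n) ≠ ↑u' := fun h => huu (Subtype.coe_injective h)
          have hpd := pattern_diff (uniformS ε) (l, (↑u : Fin n)) (l, (↑u' : Fin n)) (i, ↑u) (i, ↑u')
            (by simp [hcoe]) (by simp [hli]) (by simp [hli, hcoe])
            (by simp [hli, hcoe.symm]) (by simp [hli]) (by simp [hcoe])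
            (integral_id hε0 hε1) (integrable_id' hε0 hε1) (integrable_inv' hε0 hε1)
          have hre : (fun d : (Fin m × Fin n) → ℝ =>
              (bb r u * (d (l, ↑u) * (d (i, ↑u))⁻¹)) * (bb r u' * (d (l, ↑u') * (d (i, ↑u'))⁻¹)))
              = fun d => (bb r u * bb r u') *
                ((d (l, ↑u) * (d (i, ↑u))⁻¹) * (d (l, ↑u') * (d (i, ↑u'))⁻¹)) := by
            funext d; ring
          constructor
          · rw [hμDpi, hre]; exact hpd.1.const_mul _
          · rw [hμDpi, hre, integral_const_mul, hpd.2, if_neg huu, mul_zero]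
      have hsq : (fun d : (Fin m × Fin n) → ℝ => (ent l r i d) ^ 2)
          = fun d => ∑ u : ↥𝓕, ∑ u' : ↥𝓕,
              (bb r u * (d (l, ↑u) * (d (i, ↑u))⁻¹)) * (bb r u' * (d (l, ↑u') * (d (i, ↑u'))⁻¹)) := by
        funext d
        simp only [hent, if_neg hli, sub_zero]
        rw [sq, Finset.sum_mul_sum]
      constructor
      · rw [hsq]
        apply integrable_finset_sum
        intro u _
        apply integrable_finset_sum
        intro u' _
        exact (key u u').1
      · rw [hsq, integral_finset_sum _ (fun u _ => integrable_finset_sum _ fun u' _ => (key u u').1)]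
        rw [if_neg hli, hY]
        have hinner : ∀ u : ↥𝓕, ∫ d, (∑ u' : ↥𝓕,
            (bb r u * (d (l, ↑u) * (d (i, ↑u))⁻¹)) * (bb r u' * (d (l, ↑u') * (d (i, ↑u'))⁻¹)))
            ∂(μD m (Fin n) ε) = (bb r u * bb r u) * (c2 * c3) := by
          intro u
          rw [integral_finset_sum _ (fun u' _ => (key u u').1)]
          rw [Finset.sum_congr rfl (fun u' _ => (key u u').2)]
          simp [Finset.sum_ite_eq]
        rw [Finset.sum_congr rfl (fun u _ => hinner u)]
        simp only [Finset.mul_sum]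
        exact Finset.sum_congr rfl fun u _ => by ring
  have hG'int : Integrable G' (μD m (Fin n) ε) := by
    rw [hG']
    apply integrable_finset_sum
    intro p _
    apply integrable_finset_sum
    intro i _
    exact (hent_key p.1 p.2 i).1
  have hG'val : ∫ d, G' d ∂(μD m (Fin n) ε)
      = (m : ℝ) * ∑ r, (X r + ((m : ℝ) - 1) * Y r) := by
    simp only [hG']
    rw [integral_finset_sum _ (fun p _ =>
      integrable_finset_sum _ fun i _ => (hent_key p.1 p.2 i).1)]
    have h1 : ∀ p : Fin m × Fin k, ∫ d, ∑ i : Fin m, (ent p.1 p.2 i d) ^ 2 ∂(μD m (Fin n) ε)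
        = X p.2 + ((m : ℝ) - 1) * Y p.2 := by
      intro p
      rw [integral_finset_sum _ (fun i _ => (hent_key p.1 p.2 i).1)]
      rw [Finset.sum_congr rfl (fun i _ => (hent_key p.1 p.2 i).2)]
      have h2 : ∀ i : Fin m, (if p.1 = i then X p.2 else Y p.2)
          = Y p.2 + (if p.1 = i then X p.2 - Y p.2 else 0) := by
        intro i; split_ifs <;> ring
      rw [Finset.sum_congr rfl (fun i _ => h2 i)]
      rw [Finset.sum_add_distrib, Finset.sum_const, Finset.sum_ite_eq]
      simp only [Finset.card_univ, Fintype.card_fin, nsmul_eq_mul, Finset.mem_univ, if_pos]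
      ring
    rw [Finset.sum_congr rfl (fun p _ => h1 p)]
    rw [Fintype.sum_prod_type]
    simp only [Finset.sum_const, Finset.card_univ, Fintype.card_fin, nsmul_eq_mul]
  have hfinal : ∑ r, (X r + ((m : ℝ) - 1) * Y r)
      = (k : ℝ) - ((fun _ => (1 : ℝ)) ⬝ᵥ ((A' * K⁻¹ * A'ᵀ) *ᵥ fun _ => 1)) := by
    have hs : ∀ r : Fin k, ∑ u : ↥𝓕, bb r u = (A' *ᵥ w) r := by
      intro r
      simp [hbb, Matrix.mulVec, dotProduct, hA', subCols]
    have hsum1 : ∑ r : Fin k, ∑ u : ↥𝓕, bb r u = v ⬝ᵥ w := by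
      rw [Finset.sum_congr rfl (fun r _ => hs r)]
      have h1d : ∑ r : Fin k, (A' *ᵥ w) r = (fun _ : Fin k => (1 : ℝ)) ⬝ᵥ (A' *ᵥ w) := by
        simp [dotProduct]
      rw [h1d, Matrix.dotProduct_mulVec, hv, Matrix.mulVec_transpose]
    have hsum2 : ∑ r : Fin k, (∑ u : ↥𝓕, bb r u) ^ 2 = w ⬝ᵥ (Δ *ᵥ w) := by
      rw [hΔ, ← Matrix.mulVec_mulVec, Matrix.dotProduct_mulVec, Matrix.vecMul_transpose]
      simp only [dotProduct]
      exact Finset.sum_congr rfl fun r _ => by rw [hs r, sq]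
    have hsum3 : ∑ r : Fin k, ∑ u : ↥𝓕, (bb r u) ^ 2
        = w ⬝ᵥ ((Matrix.diagonal fun u => Δ u u) *ᵥ w) := by
      rw [Finset.sum_comm]
      simp only [dotProduct, Matrix.mulVec, Matrix.diagonal_apply, ite_mul, zero_mul,
        Finset.sum_ite_eq, Finset.mem_univ, if_pos]
      refine Finset.sum_congr rfl fun u _ => ?_
      have hd : Δ u u = ∑ r : Fin k, A r ↑u * A r ↑u := by
        rw [hΔ]
        simp [Matrix.mul_apply, hA', subCols]
      rw [hd]
      have : ∑ r : Fin k, (bb r u) ^ 2 = (∑ r : Fin k, A r ↑u * A r ↑u) * (w u * w u) := by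
        rw [Finset.sum_mul]
        exact Finset.sum_congr rfl fun r _ => by simp only [hbb]; ring
      rw [this]
      ring
    have hKw : K *ᵥ w = v := by
      rw [hw, Matrix.mulVec_mulVec, Matrix.mul_nonsing_inv _ hKinv, Matrix.one_mulVec]
    have hKv : w ⬝ᵥ (K *ᵥ w) = v ⬝ᵥ w := by
      rw [hKw, dotProduct_comm]
    have hbig : (w ⬝ᵥ (Δ *ᵥ w)) + (c2 * c3 * ((m : ℝ) - 1)) *
        (w ⬝ᵥ ((Matrix.diagonal fun u => Δ u u) *ᵥ w)) = v ⬝ᵥ w := by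
      rw [← hKv, hK, hc]
      rw [Matrix.add_mulVec, dotProduct_add, Matrix.smul_mulVec,
        dotProduct_smul, smul_eq_mul]
    have hq : (fun _ => (1 : ℝ)) ⬝ᵥ ((A' * K⁻¹ * A'ᵀ) *ᵥ fun _ => 1) = v ⬝ᵥ w := by
      rw [← Matrix.mulVec_mulVec, ← Matrix.mulVec_mulVec, ← hv, ← hw,
        Matrix.dotProduct_mulVec, hv, Matrix.mulVec_transpose]
    have hXsum : ∑ r : Fin k, X r = (w ⬝ᵥ (Δ *ᵥ w)) - 2 * (v ⬝ᵥ w) + (k : ℝ) := by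
      have h3 : ∀ r : Fin k, X r
          = (∑ u : ↥𝓕, bb r u) ^ 2 - 2 * (∑ u : ↥𝓕, bb r u) + 1 := by
        intro r; rw [hX]; ring
      rw [Finset.sum_congr rfl (fun r _ => h3 r)]
      rw [Finset.sum_add_distrib, Finset.sum_sub_distrib, hsum2, ← Finset.mul_sum, hsum1]
      simp [Finset.card_univ]
    have hYsum : ∑ r : Fin k, Y r
        = (c2 * c3) * (w ⬝ᵥ ((Matrix.diagonal fun u => Δ u u) *ᵥ w)) := by
      simp only [hY]
      rw [← Finset.mul_sum, hsum3]
    rw [Finset.sum_add_distrib, ← Finset.mul_sum, hXsum, hYsum, hq]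
    linear_combination hbig
  calc ∫ d, err (encB A d) 𝓕 ∂(μD m (Fin n) ε)
      ≤ ∫ d, G' d ∂(μD m (Fin n) ε) :=
        integral_mono_of_nonneg (Filter.Eventually.of_forall herr_nonneg) hG'int herrG'
    _ = (m : ℝ) * ∑ r, (X r + ((m : ℝ) - 1) * Y r) := hG'val
    _ = (m : ℝ) * k - (m : ℝ) *
          ((fun _ => (1 : ℝ)) ⬝ᵥ ((subCols A 𝓕 * K⁻¹ * (subCols A 𝓕)ᵀ) *ᵥ fun _ => 1)) := by
        rw [hfinal, ← hA']
        ring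

end
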